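/- arXiv:1609.00738 — 4 statements merged into one kernel-verified Lean document; each statement's English description precedes it below -/
import Mathlib

section
/- Let L and M be modular lattices of finite length with an antitone Galois connection (.)° between them, and let rk_M denote the rank (height) function on M. Then the function deg_L(l) = rk_M(l°) is lower semimodular on L, i.e., deg_L(x) + deg_L(y) ≤ deg_L(x ∨ y) + deg_L(x ∧ y) for all x, y ∈ L. -/
/-- For modular lattices `L`, `M` of finite length with an antitone Galois
connection between them, the degree function `deg_L l = height (l°)` is lower
semimodular on `L`. -/
theorem degree_of_galois_connection_lower_semimodular {L M : Type*}
    [Lattice L] [Lattice M] [IsModularLattice L] [IsModularLattice M]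
    (hLfin : ∀ x : L, Order.height x < ⊤)
    (hMfin : ∀ m : M, Order.height m < ⊤)
    (hrk_mod : ∀ x y : M,
      Order.height x + Order.height y = Order.height (x ⊔ y) + Order.height (x ⊓ y))
    (f : L → M) (g : M → L) (hf : Antitone f) (hg : Antitone g)
    (hgf : ∀ x : L, x ≤ g (f x)) (hfg : ∀ m : M, m ≤ f (g m))
    (x y : L) :
    Order.height (f x) + Order.height (f y)
      ≤ Order.height (f (x ⊔ y)) + Order.height (f (x ⊓ y)) := by
  have hsup : f (x ⊔ y) = f x ⊓ f y := by
    apply le_antisymm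
    · exact le_inf (hf le_sup_left) (hf le_sup_right)
    · have hx : x ≤ g (f x ⊓ f y) := (hgf x).trans (hg inf_le_left)
      have hy : y ≤ g (f x ⊓ f y) := (hgf y).trans (hg inf_le_right)
      exact (hfg _).trans (hf (sup_le hx hy))
  have hinf : f x ⊔ f y ≤ f (x ⊓ y) :=
    sup_le (hf inf_le_left) (hf inf_le_right)
  calc Order.height (f x) + Order.height (f y)
      = Order.height (f x ⊔ f y) + Order.height (f x ⊓ f y) := hrk_mod _ _
    _ = Order.height (f x ⊓ f y) + Order.height (f x ⊔ f y) := add_comm _ _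
    _ ≤ Order.height (f (x ⊔ y)) + Order.height (f (x ⊓ y)) := by
        rw [hsup]
        exact add_le_add le_rfl (Order.height_mono hinf)
end

section
/- (Wei duality for matroids) Let M be a matroid on a set E of size n with rank k, and M* its dual (of rank n−k). Define dᵢ(M) = min{|J| : J ⊆ E, h⁰(M,J) = i} for 1 ≤ i ≤ k, where h⁰(M,J) = r(E) − r(E\J). Then the sets {dᵢ(M) : 1 ≤ i ≤ k} and {n+1−dᵢ(M*) : 1 ≤ i ≤ n−k} are disjoint, hence partition {1,…,n}. -/
/-- The rank of a subset `J`: the maximal cardinality of an independent subset of `J`. -/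
def matroidRank {α : Type*} [DecidableEq α] (Indep : Finset α → Prop)
    [DecidablePred Indep] (J : Finset α) : ℕ :=
  (J.powerset.filter Indep).sup Finset.card

/-- `h⁰(M, J) = r(E) - r(E \ J)`. -/
def h0Matroid {α : Type*} [DecidableEq α] (E : Finset α) (Indep : Finset α → Prop)
    [DecidablePred Indep] (J : Finset α) : ℕ :=
  matroidRank Indep E - matroidRank Indep (E \ J)

/-- The rank function of the dual matroid: `r*(S) = |S| + r(E \ S) - r(E)`. -/
def dualMatroidRank {α : Type*} [DecidableEq α] (E : Finset α) (Indep : Finset α → Prop)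
    [DecidablePred Indep] (S : Finset α) : ℕ :=
  S.card + matroidRank Indep (E \ S) - matroidRank Indep E

/-- `h⁰(M*, J) = r*(E) - r*(E \ J)`. -/
def h0DualMatroid {α : Type*} [DecidableEq α] (E : Finset α) (Indep : Finset α → Prop)
    [DecidablePred Indep] (J : Finset α) : ℕ :=
  dualMatroidRank E Indep E - dualMatroidRank E Indep (E \ J)

/-- The `i`-th generalized weight of a matroid, defined from its `h⁰` function:
`dᵢ = min { |J| : J ⊆ E, h⁰(J) = i }`. -/
noncomputable def matroidWeight {α : Type*} (E : Finset α) (h0 : Finset α → ℕ)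
    (i : ℕ) : ℕ :=
  sInf {m : ℕ | ∃ J ⊆ E, J.card = m ∧ h0 J = i}

section Rank

variable {α : Type*} [DecidableEq α] (Indep : Finset α → Prop) [DecidablePred Indep]

lemma wRank_le_card (J : Finset α) : matroidRank Indep J ≤ J.card := by
  apply Finset.sup_le
  intro I hI
  simp only [Finset.mem_filter, Finset.mem_powerset] at hI
  exact Finset.card_le_card hI.1

lemma wRank_mono {J J' : Finset α} (h : J ⊆ J') :
    matroidRank Indep J ≤ matroidRank Indep J' := by
  apply Finset.sup_le
  intro I hI
  simp only [Finset.mem_filter, Finset.mem_powerset] at hI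
  exact Finset.le_sup (Finset.mem_filter.mpr
    ⟨Finset.mem_powerset.mpr (hI.1.trans h), hI.2⟩)

lemma wRank_empty (h_empty : Indep ∅) : matroidRank Indep (∅ : Finset α) = 0 := by
  have := wRank_le_card Indep (∅ : Finset α)
  simpa using this

variable (h_mono : ∀ I I' : Finset α, I' ⊆ I → Indep I → Indep I')

include h_mono in
lemma wRank_insert_le (x : α) (J : Finset α) :
    matroidRank Indep (insert x J) ≤ matroidRank Indep J + 1 := by
  apply Finset.sup_le
  intro I hI
  simp only [Finset.mem_filter, Finset.mem_powerset] at hI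
  have h1 : I.erase x ⊆ J := by
    intro a ha
    rcases Finset.mem_erase.mp ha with ⟨hax, haI⟩
    rcases Finset.mem_insert.mp (hI.1 haI) with h | h
    · exact absurd h hax
    · exact h
  have h2 : Indep (I.erase x) := h_mono I _ (Finset.erase_subset x I) hI.2
  have h3 : (I.erase x).card ≤ matroidRank Indep J :=
    Finset.le_sup (Finset.mem_filter.mpr ⟨Finset.mem_powerset.mpr h1, h2⟩)
  have h4 : I.card ≤ (I.erase x).card + 1 := by
    by_cases hx : x ∈ I
    · rw [Finset.card_erase_of_mem hx]; omega
    · rw [Finset.erase_eq_of_notMem hx]; omega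
  omega

include h_mono in
lemma wRank_le_sdiff_add (S A : Finset α) :
    matroidRank Indep A ≤ matroidRank Indep (A \ S) + S.card := by
  induction S using Finset.induction_on with
  | empty => simp
  | @insert a S ha IH =>
    have h1 : A \ S ⊆ insert a ((A \ S).erase a) := Finset.subset_insert_iff.mpr (by rfl)
    have h2 : matroidRank Indep (A \ S) ≤ matroidRank Indep ((A \ S).erase a) + 1 :=
      le_trans (wRank_mono Indep h1) (wRank_insert_le Indep h_mono a _)
    rw [Finset.sdiff_insert] at *
    rw [Finset.card_insert_of_notMem ha]
    omega

end Rank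

section H0

variable {α : Type*} [DecidableEq α] (E : Finset α) (Indep : Finset α → Prop) [DecidablePred Indep]

lemma wH0_add (J : Finset α) :
    h0Matroid E Indep J + matroidRank Indep (E \ J) = matroidRank Indep E := by
  have := wRank_mono Indep (Finset.sdiff_subset (s := E) (t := J))
  unfold h0Matroid
  omega

variable (h_mono : ∀ I I' : Finset α, I' ⊆ I → Indep I → Indep I')

include h_mono in
lemma wH0dual_add {J : Finset α} (hJ : J ⊆ E) :
    h0DualMatroid E Indep J + matroidRank Indep J = J.card := by
  have e1 : E \ E = (∅ : Finset α) := Finset.sdiff_self E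
  have e2 : E \ (E \ J) = J := Finset.sdiff_sdiff_eq_self hJ
  have c1 : (E \ J).card = E.card - J.card := Finset.card_sdiff_of_subset hJ
  have hm : J.card ≤ E.card := Finset.card_le_card hJ
  have r1 : matroidRank Indep (∅ : Finset α) = 0 := by
    have := wRank_le_card Indep (∅ : Finset α); simpa using this
  have r2 : matroidRank Indep E ≤ E.card := wRank_le_card Indep E
  have r3 : matroidRank Indep J ≤ J.card := wRank_le_card Indep J
  have r4 : matroidRank Indep E ≤ matroidRank Indep (E \ (E \ J)) + (E \ J).card :=
    wRank_le_sdiff_add Indep h_mono _ _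
  rw [e2] at r4
  unfold h0DualMatroid dualMatroidRank
  rw [e1, e2, r1, c1]
  omega

include h_mono in
lemma wH0_relation {J : Finset α} (hJ : J ⊆ E) :
    h0Matroid E Indep J + (E.card - matroidRank Indep E)
      = h0DualMatroid E Indep (E \ J) + J.card := by
  have a1 := wH0_add E Indep J
  have a2 := wH0dual_add E Indep h_mono (Finset.sdiff_subset (s := E) (t := J))
  have c1 : (E \ J).card = E.card - J.card := Finset.card_sdiff_of_subset hJ
  have hm : J.card ≤ E.card := Finset.card_le_card hJ
  have r2 : matroidRank Indep E ≤ E.card := wRank_le_card Indep E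
  omega

include h_mono in
lemma wH0_mono {J J' : Finset α} (hJJ' : J ⊆ J') :
    h0Matroid E Indep J ≤ h0Matroid E Indep J' := by
  have a1 := wH0_add E Indep J
  have a2 := wH0_add E Indep J'
  have : matroidRank Indep (E \ J') ≤ matroidRank Indep (E \ J) :=
    wRank_mono Indep (Finset.sdiff_subset_sdiff (Finset.Subset.refl E) hJJ')
  omega

include h_mono in
lemma wH0_step (J : Finset α) (x : α) :
    h0Matroid E Indep J ≤ h0Matroid E Indep (J.erase x) + 1 := by
  have a1 := wH0_add E Indep J
  have a2 := wH0_add E Indep (J.erase x)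
  have h1 : E \ J.erase x ⊆ insert x (E \ J) := by
    intro a ha
    rcases Finset.mem_sdiff.mp ha with ⟨haE, haJ⟩
    by_cases hax : a = x
    · simp [hax]
    · exact Finset.mem_insert.mpr (Or.inr (Finset.mem_sdiff.mpr
        ⟨haE, fun h => haJ (Finset.mem_erase.mpr ⟨hax, h⟩)⟩))
  have h2 : matroidRank Indep (E \ J.erase x) ≤ matroidRank Indep (E \ J) + 1 :=
    le_trans (wRank_mono Indep h1) (wRank_insert_le Indep h_mono x _)
  omega

lemma wH0_empty : h0Matroid E Indep ∅ = 0 := by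
  have := wH0_add E Indep ∅
  simp only [Finset.sdiff_empty] at this
  omega

lemma wH0_ground : h0Matroid E Indep E + 0 = matroidRank Indep E := by
  have := wH0_add E Indep E
  have e1 : E \ E = (∅ : Finset α) := Finset.sdiff_self E
  rw [e1] at this
  have r1 : matroidRank Indep (∅ : Finset α) = 0 := by
    have := wRank_le_card Indep (∅ : Finset α); simpa using this
  omega

include h_mono in
lemma wH0dual_mono {J J' : Finset α} (hJJ' : J ⊆ J') (hJ' : J' ⊆ E) :
    h0DualMatroid E Indep J ≤ h0DualMatroid E Indep J' := by
  have a1 := wH0dual_add E Indep h_mono (hJJ'.trans hJ')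
  have a2 := wH0dual_add E Indep h_mono hJ'
  have r4 : matroidRank Indep J' ≤ matroidRank Indep (J' \ (J' \ J)) + (J' \ J).card :=
    wRank_le_sdiff_add Indep h_mono _ _
  rw [Finset.sdiff_sdiff_eq_self hJJ'] at r4
  have c1 : (J' \ J).card = J'.card - J.card := Finset.card_sdiff_of_subset hJJ'
  have hm : J.card ≤ J'.card := Finset.card_le_card hJJ'
  omega

include h_mono in
lemma wH0dual_step {J : Finset α} (hJ : J ⊆ E) (x : α) :
    h0DualMatroid E Indep J ≤ h0DualMatroid E Indep (J.erase x) + 1 := by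
  have a1 := wH0dual_add E Indep h_mono hJ
  have a2 := wH0dual_add E Indep h_mono ((Finset.erase_subset x J).trans hJ)
  have h2 : matroidRank Indep (J.erase x) ≤ matroidRank Indep J :=
    wRank_mono Indep (Finset.erase_subset x J)
  have h4 : J.card ≤ (J.erase x).card + 1 := by
    by_cases hx : x ∈ J
    · rw [Finset.card_erase_of_mem hx]; omega
    · rw [Finset.erase_eq_of_notMem hx]; omega
  have h5 : (J.erase x).card ≤ J.card := Finset.card_le_card (Finset.erase_subset x J)
  omega

include h_mono in
lemma wH0dual_empty : h0DualMatroid E Indep ∅ = 0 := by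
  have := wH0dual_add E Indep h_mono (Finset.empty_subset E)
  simp only [Finset.card_empty] at this
  omega

include h_mono in
lemma wH0dual_ground : h0DualMatroid E Indep E + matroidRank Indep E = E.card := by
  have := wH0dual_add E Indep h_mono (Finset.Subset.refl E)
  omega

end H0

section Gmax

variable {α : Type*} (E : Finset α) (h : Finset α → ℕ)

/-- max of `h` over subsets of `E` of size `m`. -/
def wGmax (m : ℕ) : ℕ := (E.powerset.filter fun J => J.card = m).sup h

lemma wGmax_exists {m : ℕ} (hm : m ≤ E.card) :
    ∃ J, J ⊆ E ∧ J.card = m ∧ h J = wGmax E h m := by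
  obtain ⟨t, ht, htc⟩ := Finset.exists_subset_card_eq hm
  have hne : (E.powerset.filter fun J => J.card = m).Nonempty :=
    ⟨t, Finset.mem_filter.mpr ⟨Finset.mem_powerset.mpr ht, htc⟩⟩
  obtain ⟨J, hJ, hJ2⟩ := Finset.exists_mem_eq_sup _ hne h
  simp only [Finset.mem_filter, Finset.mem_powerset] at hJ
  exact ⟨J, hJ.1, hJ.2, hJ2.symm⟩

lemma le_wGmax {J : Finset α} (hJ : J ⊆ E) : h J ≤ wGmax E h J.card :=
  Finset.le_sup (Finset.mem_filter.mpr ⟨Finset.mem_powerset.mpr hJ, rfl⟩)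

lemma wGmax_zero (h0 : h ∅ = 0) : wGmax E h 0 = 0 := by
  apply Nat.le_antisymm _ (Nat.zero_le _)
  apply Finset.sup_le
  intro J hJ
  simp only [Finset.mem_filter, Finset.mem_powerset, Finset.card_eq_zero] at hJ
  rw [hJ.2, h0]

lemma wGmax_card : wGmax E h E.card = h E := by
  apply Nat.le_antisymm
  · apply Finset.sup_le
    intro J hJ
    simp only [Finset.mem_filter, Finset.mem_powerset] at hJ
    rw [Finset.eq_of_subset_of_card_le hJ.1 (le_of_eq hJ.2.symm)]
  · exact le_wGmax E h (Finset.Subset.refl E)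

lemma wGmax_mono (Hmono : ∀ ⦃J J' : Finset α⦄, J ⊆ J' → J' ⊆ E → h J ≤ h J')
    {m m' : ℕ} (hmm' : m ≤ m') (hm' : m' ≤ E.card) : wGmax E h m ≤ wGmax E h m' := by
  obtain ⟨J, hJE, hJc, hJg⟩ := wGmax_exists E h (hmm'.trans hm')
  obtain ⟨J', hJJ', hJ'E, hJ'c⟩ := Finset.exists_subsuperset_card_eq hJE (le_of_eq_of_le hJc hmm')
    (by omega)
  calc wGmax E h m = h J := hJg.symm
    _ ≤ h J' := Hmono hJJ' hJ'E
    _ ≤ wGmax E h J'.card := le_wGmax E h hJ'E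
    _ = wGmax E h m' := by rw [hJ'c]

lemma wGmax_step [DecidableEq α]
    (Hstep : ∀ ⦃J : Finset α⦄, J ⊆ E → ∀ x, h J ≤ h (J.erase x) + 1)
    {m : ℕ} (hm : m + 1 ≤ E.card) : wGmax E h (m + 1) ≤ wGmax E h m + 1 := by
  obtain ⟨J, hJE, hJc, hJg⟩ := wGmax_exists E h hm
  have hne : J.Nonempty := Finset.card_pos.mp (by omega)
  obtain ⟨x, hx⟩ := hne
  have h1 : h J ≤ h (J.erase x) + 1 := Hstep hJE x
  have h2 : (J.erase x).card = m := by rw [Finset.card_erase_of_mem hx, hJc]; omega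
  have h3 : h (J.erase x) ≤ wGmax E h m := h2 ▸ le_wGmax E h ((Finset.erase_subset x J).trans hJE)
  omega

lemma wGmax_eq_zero_of_gt {m : ℕ} (hm : E.card < m) : wGmax E h m = 0 := by
  unfold wGmax
  convert Finset.sup_empty
  rw [Finset.filter_eq_empty_iff]
  intro J hJ
  simp only [Finset.mem_powerset] at hJ
  have := Finset.card_le_card hJ
  omega
  rfl

/-- descending: any value `1 ≤ i ≤ h J` is attained by a subset of `J`. -/
lemma w_descend [DecidableEq α] (h0 : h ∅ = 0)
    (Hstep : ∀ ⦃J : Finset α⦄, J ⊆ E → ∀ x, h J ≤ h (J.erase x) + 1)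
    {i : ℕ} (hi : 1 ≤ i) :
    ∀ N (J : Finset α), J.card ≤ N → J ⊆ E → i ≤ h J → ∃ J' ⊆ J, h J' = i := by
  intro N
  induction N with
  | zero =>
    intro J hJc hJE hiJ
    have : J = ∅ := Finset.card_eq_zero.mp (by omega)
    rw [this, h0] at hiJ
    omega
  | succ N IH =>
    intro J hJc hJE hiJ
    by_cases heq : h J = i
    · exact ⟨J, Finset.Subset.refl J, heq⟩
    · have hne : J.Nonempty := by
        rcases Finset.eq_empty_or_nonempty J with rfl | hne
        · rw [h0] at hiJ; omega
        · exact hne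
      obtain ⟨x, hx⟩ := hne
      have h1 : h J ≤ h (J.erase x) + 1 := Hstep hJE x
      have h2 : (J.erase x).card ≤ N := by
        rw [Finset.card_erase_of_mem hx]; omega
      obtain ⟨J', hJ'1, hJ'2⟩ := IH (J.erase x) h2 ((Finset.erase_subset x J).trans hJE)
        (by omega)
      exact ⟨J', hJ'1.trans (Finset.erase_subset x J), hJ'2⟩

/-- the weight `dᵢ` equals the first `m` where `wGmax` reaches `i`. -/
lemma wWeight_spec [DecidableEq α] (h0 : h ∅ = 0)
    (Hmono : ∀ ⦃J J' : Finset α⦄, J ⊆ J' → J' ⊆ E → h J ≤ h J')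
    (Hstep : ∀ ⦃J : Finset α⦄, J ⊆ E → ∀ x, h J ≤ h (J.erase x) + 1)
    {i : ℕ} (hi1 : 1 ≤ i) (hiK : i ≤ h E) :
    ∃ m₀, matroidWeight E h i = m₀ ∧ 1 ≤ m₀ ∧ m₀ ≤ E.card ∧
      wGmax E h (m₀ - 1) < i ∧ i ≤ wGmax E h m₀ ∧ (∀ m', i ≤ wGmax E h m' → m₀ ≤ m') := by
  set S : Set ℕ := {m | i ≤ wGmax E h m} with hS
  have hSne : S.Nonempty := ⟨E.card, by simp only [hS, Set.mem_setOf_eq, wGmax_card]; exact hiK⟩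
  set m₀ := sInf S with hm₀
  have hm₀S : i ≤ wGmax E h m₀ := Nat.sInf_mem hSne
  have hmin : ∀ m', i ≤ wGmax E h m' → m₀ ≤ m' := fun m' hm' => Nat.sInf_le hm'
  have hm₀n : m₀ ≤ E.card := hmin E.card (by rw [wGmax_card]; exact hiK)
  have hm₀1 : 1 ≤ m₀ := by
    by_contra hcon
    have : m₀ = 0 := by omega
    rw [this, wGmax_zero E h h0] at hm₀S
    omega
  have hjump : wGmax E h (m₀ - 1) < i := by
    by_contra hcon
    have := hmin (m₀ - 1) (by omega)
    omega
  refine ⟨m₀, ?_, hm₀1, hm₀n, hjump, hm₀S, hmin⟩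
  -- show matroidWeight E h i = m₀
  obtain ⟨J, hJE, hJc, hJg⟩ := wGmax_exists E h hm₀n
  have hiJ : i ≤ h J := by omega
  obtain ⟨J', hJ'J, hJ'h⟩ := w_descend E h h0 Hstep hi1 J.card J (le_refl _) hJE hiJ
  have hJ'card_le : J'.card ≤ m₀ := hJc ▸ Finset.card_le_card hJ'J
  have hJ'card_ge : m₀ ≤ J'.card := hmin J'.card (hJ'h ▸ le_wGmax E h (hJ'J.trans hJE))
  have hJ'card : J'.card = m₀ := le_antisymm hJ'card_le hJ'card_ge
  have hmem : m₀ ∈ {m : ℕ | ∃ J ⊆ E, J.card = m ∧ h J = i} :=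
    ⟨J', hJ'J.trans hJE, hJ'card, hJ'h⟩
  apply le_antisymm (Nat.sInf_le hmem)
  have hlb : ∀ m ∈ {m : ℕ | ∃ J ⊆ E, J.card = m ∧ h J = i}, m₀ ≤ m := by
    rintro m ⟨J'', hJ''E, hJ''c, hJ''h⟩
    exact hmin m (by rw [← hJ''c]; exact hJ''h ▸ le_wGmax E h hJ''E)
  exact hlb _ (Nat.sInf_mem ⟨m₀, hmem⟩)

/-- the image of `[1, h E]` under the weight function is exactly the jump set of `wGmax`. -/
lemma wWeight_image [DecidableEq α] (h0 : h ∅ = 0)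
    (Hmono : ∀ ⦃J J' : Finset α⦄, J ⊆ J' → J' ⊆ E → h J ≤ h J')
    (Hstep : ∀ ⦃J : Finset α⦄, J ⊆ E → ∀ x, h J ≤ h (J.erase x) + 1) :
    (Finset.Icc 1 (h E)).image (matroidWeight E h) =
      (Finset.Icc 1 E.card).filter (fun m => wGmax E h (m - 1) < wGmax E h m) := by
  ext m
  simp only [Finset.mem_image, Finset.mem_filter, Finset.mem_Icc]
  constructor
  · rintro ⟨i, ⟨hi1, hiK⟩, hw⟩
    obtain ⟨m₀, hweq, hm₀1, hm₀n, hjump, hge, hmin⟩ := wWeight_spec E h h0 Hmono Hstep hi1 hiK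
    rw [hw] at hweq
    subst hweq
    exact ⟨⟨hm₀1, hm₀n⟩, by omega⟩
  · rintro ⟨⟨hm1, hmn⟩, hjump⟩
    refine ⟨wGmax E h m, ⟨by omega, by rw [← wGmax_card E h]; exact wGmax_mono E h Hmono hmn (le_refl _)⟩, ?_⟩
    obtain ⟨m₀, hweq, hm₀1, hm₀n, hjump', hge, hmin⟩ :=
      wWeight_spec E h h0 Hmono Hstep (i := wGmax E h m) (by omega)
        (by rw [← wGmax_card E h]; exact wGmax_mono E h Hmono hmn (le_refl _))
    rw [hweq]
    have h1 : m₀ ≤ m := hmin m (le_refl _)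
    have h2 : m ≤ m₀ := by
      by_contra hcon
      have : m₀ ≤ m - 1 := by omega
      have := wGmax_mono E h Hmono this (by omega)
      omega
    omega

end Gmax

/-- Wei duality for matroids: the sets `{dᵢ(M) : 1 ≤ i ≤ k}` and
`{n + 1 - dᵢ(M*) : 1 ≤ i ≤ n - k}` are disjoint and partition `{1, …, n}`. -/
theorem wei_duality_matroid {α : Type*} [DecidableEq α]
    (E : Finset α) (Indep : Finset α → Prop) [DecidablePred Indep]
    (h_subset_ground : ∀ I, Indep I → I ⊆ E)
    (h_empty : Indep ∅)
    (h_mono : ∀ I I' : Finset α, I' ⊆ I → Indep I → Indep I')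
    (h_exch : ∀ I₁ I₂ : Finset α, Indep I₁ → Indep I₂ → I₁.card < I₂.card →
      ∃ e ∈ I₂ \ I₁, Indep (insert e I₁))
    (n k : ℕ) (hn : E.card = n) (hk : matroidRank Indep E = k) :
    ((Finset.Icc 1 k).image (matroidWeight E (h0Matroid E Indep)) ∩
      (Finset.Icc 1 (n - k)).image
        (fun i => n + 1 - matroidWeight E (h0DualMatroid E Indep) i) = ∅) ∧
    ((Finset.Icc 1 k).image (matroidWeight E (h0Matroid E Indep)) ∪
      (Finset.Icc 1 (n - k)).image
        (fun i => n + 1 - matroidWeight E (h0DualMatroid E Indep) i)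
      = Finset.Icc 1 n) := by
  have hkn : k ≤ n := by rw [← hn, ← hk]; exact wRank_le_card Indep E
  -- abbreviations
  let h₁ := h0Matroid E Indep
  let h₂ := h0DualMatroid E Indep
  show ((Finset.Icc 1 k).image (matroidWeight E h₁) ∩
      (Finset.Icc 1 (n - k)).image (fun i => n + 1 - matroidWeight E h₂ i) = ∅) ∧
    ((Finset.Icc 1 k).image (matroidWeight E h₁) ∪
      (Finset.Icc 1 (n - k)).image (fun i => n + 1 - matroidWeight E h₂ i)
      = Finset.Icc 1 n)
  -- properties of h₁
  have h₁empty : h₁ ∅ = 0 := wH0_empty E Indep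
  have h₁mono : ∀ ⦃J J' : Finset α⦄, J ⊆ J' → J' ⊆ E → h₁ J ≤ h₁ J' :=
    fun J J' hJJ' _ => wH0_mono E Indep h_mono hJJ'
  have h₁step : ∀ ⦃J : Finset α⦄, J ⊆ E → ∀ x, h₁ J ≤ h₁ (J.erase x) + 1 :=
    fun J _ x => wH0_step E Indep h_mono J x
  have h₁E : h₁ E = k := by
    have := wH0_ground E Indep
    show h0Matroid E Indep E = k
    omega
  -- properties of h₂
  have h₂empty : h₂ ∅ = 0 := wH0dual_empty E Indep h_mono
  have h₂mono : ∀ ⦃J J' : Finset α⦄, J ⊆ J' → J' ⊆ E → h₂ J ≤ h₂ J' :=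
    fun J J' hJJ' hJ'E => wH0dual_mono E Indep h_mono hJJ' hJ'E
  have h₂step : ∀ ⦃J : Finset α⦄, J ⊆ E → ∀ x, h₂ J ≤ h₂ (J.erase x) + 1 :=
    fun J hJE x => wH0dual_step E Indep h_mono hJE x
  have h₂E : h₂ E = n - k := by
    have := wH0dual_ground E Indep h_mono
    show h0DualMatroid E Indep E = n - k
    omega
  -- the images are the jump sets
  have himg1 : (Finset.Icc 1 k).image (matroidWeight E h₁) =
      (Finset.Icc 1 n).filter (fun m => wGmax E h₁ (m - 1) < wGmax E h₁ m) := by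
    rw [← h₁E, ← hn]
    exact wWeight_image E h₁ h₁empty h₁mono h₁step
  have himg2 : (Finset.Icc 1 (n - k)).image (matroidWeight E h₂) =
      (Finset.Icc 1 n).filter (fun m => wGmax E h₂ (m - 1) < wGmax E h₂ m) := by
    rw [← h₂E, ← hn]
    exact wWeight_image E h₂ h₂empty h₂mono h₂step
  -- gmax relation
  have hrel : ∀ m, m ≤ n → wGmax E h₁ m + (n - k) = wGmax E h₂ (n - m) + m := by
    intro m hm
    rw [← hn] at hm
    apply le_antisymm
    · obtain ⟨J, hJE, hJc, hJg⟩ := wGmax_exists E h₁ hm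
      have hid := wH0_relation E Indep h_mono hJE
      rw [hn, hk] at hid
      have h2 : (E \ J).card = n - m := by rw [Finset.card_sdiff_of_subset hJE, hJc, hn]
      have h3 : h₂ (E \ J) ≤ wGmax E h₂ (n - m) :=
        h2 ▸ le_wGmax E h₂ (Finset.sdiff_subset (s := E) (t := J))
      have h4' : h0Matroid E Indep J = wGmax E h₁ m := hJg
      have h3' : h0DualMatroid E Indep (E \ J) ≤ wGmax E h₂ (n - m) := h3
      rw [hJc] at hid
      omega
    · have hnm : n - m ≤ E.card := by omega
      obtain ⟨J', hJ'E, hJ'c, hJ'g⟩ := wGmax_exists E h₂ hnm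
      have hJE : E \ J' ⊆ E := Finset.sdiff_subset (s := E) (t := J')
      have hEJ : E \ (E \ J') = J' := Finset.sdiff_sdiff_eq_self hJ'E
      have hJc : (E \ J').card = m := by
        rw [Finset.card_sdiff_of_subset hJ'E, hJ'c, hn]; omega
      have hid := wH0_relation E Indep h_mono hJE
      rw [hn, hk, hEJ, hJc] at hid
      have h3' : h0Matroid E Indep (E \ J') ≤ wGmax E h₁ m := hJc ▸ le_wGmax E h₁ hJE
      have h4' : h0DualMatroid E Indep J' = wGmax E h₂ (n - m) := hJ'g
      omega
  -- key equivalence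
  have hkey : ∀ m, 1 ≤ m → m ≤ n →
      ((wGmax E h₁ (m - 1) < wGmax E h₁ m) ↔
        ¬(wGmax E h₂ (n - m) < wGmax E h₂ (n - m + 1))) := by
    intro m hm1 hmn
    have r1 := hrel m hmn
    have r2 := hrel (m - 1) (by omega)
    have e1 : n - (m - 1) = n - m + 1 := by omega
    rw [e1] at r2
    have mono1 : wGmax E h₁ (m - 1) ≤ wGmax E h₁ m :=
      wGmax_mono E h₁ h₁mono (by omega) (by omega)
    have step1 : wGmax E h₁ m ≤ wGmax E h₁ (m - 1) + 1 := by
      have := wGmax_step E h₁ h₁step (m := m - 1) (by omega)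
      have e2 : m - 1 + 1 = m := by omega
      rw [e2] at this
      exact this
    omega
  -- rewrite the second image
  have himg2' : (Finset.Icc 1 (n - k)).image (fun i => n + 1 - matroidWeight E h₂ i) =
      (Finset.Icc 1 n).filter (fun m => ¬(wGmax E h₁ (m - 1) < wGmax E h₁ m)) := by
    have hcomp : (Finset.Icc 1 (n - k)).image (fun i => n + 1 - matroidWeight E h₂ i) =
        ((Finset.Icc 1 (n - k)).image (matroidWeight E h₂)).image (fun m => n + 1 - m) := by
      rw [Finset.image_image]
      rfl
    rw [hcomp, himg2]
    ext m
    simp only [Finset.mem_image, Finset.mem_filter, Finset.mem_Icc]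
    constructor
    · rintro ⟨m', ⟨⟨hm'1, hm'n⟩, hjump⟩, hm⟩
      have hm1 : 1 ≤ m := by omega
      have hmn : m ≤ n := by omega
      refine ⟨⟨hm1, hmn⟩, ?_⟩
      rw [hkey m hm1 hmn]
      intro hcon
      have e2 : n - m + 1 = m' := by omega
      have e1 : n - m = m' - 1 := by omega
      rw [e2, e1] at hcon
      omega
    · rintro ⟨⟨hm1, hmn⟩, hnj⟩
      rw [hkey m hm1 hmn] at hnj
      push_neg at hnj
      refine ⟨n + 1 - m, ⟨⟨by omega, by omega⟩, ?_⟩, by omega⟩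
      have e1 : n + 1 - m - 1 = n - m := by omega
      have e2 : n + 1 - m = n - m + 1 := by omega
      rw [e1]
      calc wGmax E h₂ (n - m) < wGmax E h₂ (n - m + 1) := by omega
        _ = wGmax E h₂ (n + 1 - m) := by rw [e2]
  rw [himg1, himg2']
  constructor
  · rw [← Finset.disjoint_iff_inter_eq_empty]
    exact Finset.disjoint_filter_filter_not _ _ _
  · exact Finset.filter_union_filter_not_eq _ _
end

section
/- (Semistability of tensor products of codes) Let A ⊆ F^{n_A} and B ⊆ F^{n_B} be linear codes such that every nonzero subcode A' ⊆ A satisfies w(A') ≥ dim(A')·w(A)/dim(A), and similarly every nonzero subcode B' ⊆ B satisfies w(B') ≥ dim(B')·w(B)/dim(B). Then every nonzero subcode C ⊆ A ⊗ B satisfies w(C) ≥ dim(C)·w(A)w(B)/(dim(A)dim(B)). -/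
/-- The support of a linear code (subspace of `F^n`). -/
def codeSupp {F : Type*} [Field F] {n : ℕ} (C : Submodule F (Fin n → F)) : Set (Fin n) :=
  {i | ∃ c ∈ C, c i ≠ 0}

/-- The support size `w` of a linear code. -/
noncomputable def codeWt {F : Type*} [Field F] {n : ℕ} (C : Submodule F (Fin n → F)) : ℕ :=
  (codeSupp C).ncard

/-- The tensor product `A ⊗ B`, identified with the space of `nA × nB` matrices
all of whose columns are in `A` and all of whose rows are in `B`. -/
def codeTensor {F : Type*} [Field F] {nA nB : ℕ}
    (A : Submodule F (Fin nA → F)) (B : Submodule F (Fin nB → F)) :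
    Submodule F (Matrix (Fin nA) (Fin nB) F) where
  carrier := {m | (∀ j, (fun i => m i j) ∈ A) ∧ (∀ i, (fun j => m i j) ∈ B)}
  add_mem' := by
    intro a b ha hb
    exact ⟨fun j => A.add_mem (ha.1 j) (hb.1 j), fun i => B.add_mem (ha.2 i) (hb.2 i)⟩
  zero_mem' := ⟨fun j => A.zero_mem, fun i => B.zero_mem⟩
  smul_mem' := by
    intro r m hm
    exact ⟨fun j => A.smul_mem r (hm.1 j), fun i => B.smul_mem r (hm.2 i)⟩

/-- The linear map sending a matrix to its `j`-th column. -/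
def colProj {F : Type*} [Field F] {nA nB : ℕ} (j : Fin nB) :
    Matrix (Fin nA) (Fin nB) F →ₗ[F] (Fin nA → F) where
  toFun m := fun i => m i j
  map_add' := fun _ _ => rfl
  map_smul' := fun _ _ => rfl

/-- The support of a space of matrices: positions where some element is nonzero. -/
def matSupp {F : Type*} [Field F] {nA nB : ℕ}
    (C : Submodule F (Matrix (Fin nA) (Fin nB) F)) : Set (Fin nA × Fin nB) :=
  {p | ∃ m ∈ C, m p.1 p.2 ≠ 0}

/-- The support size of a space of matrices. -/
noncomputable def matWt {F : Type*} [Field F] {nA nB : ℕ}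
    (C : Submodule F (Matrix (Fin nA) (Fin nB) F)) : ℕ :=
  (matSupp C).ncard


open Module

set_option synthInstance.maxHeartbeats 1000000
set_option maxHeartbeats 1000000
set_option linter.unusedVariables false

section Aux
variable {F : Type*} [Field F] {nA nB : ℕ}

def rowProj {F : Type*} [Field F] {nA nB : ℕ} (i : Fin nA) :
    Matrix (Fin nA) (Fin nB) F →ₗ[F] (Fin nB → F) where
  toFun m := fun j => m i j
  map_add' := fun _ _ => rfl
  map_smul' := fun _ _ => rfl


lemma codeWt_bot {n : ℕ} : codeWt (⊥ : Submodule F (Fin n → F)) = 0 := by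
  have : codeSupp (⊥ : Submodule F (Fin n → F)) = ∅ := by
    ext i; simp [codeSupp]
  rw [codeWt, this, Set.ncard_empty]


lemma sum_finrank_col_ge
    (B : Submodule F (Fin nB → F)) (μ : ℝ)
    (hB : ∀ B' : Submodule F (Fin nB → F), B' ≤ B → (codeWt B' : ℝ) ≥ finrank F B' * μ)
    (s : Finset (Fin nA))
    (C : Submodule F (Matrix (Fin nA) (Fin nB) F))
    (hrow : ∀ m ∈ C, ∀ i, (fun j => m i j) ∈ B)
    (hs : ∀ m ∈ C, ∀ i ∉ s, ∀ j, m i j = 0) :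
    ((∑ j, finrank F (C.map (colProj j)) : ℕ) : ℝ) ≥ finrank F C * μ := by
  classical
  induction s using Finset.induction generalizing C with
  | empty =>
    have hC : C = ⊥ := by
      rw [eq_bot_iff]
      intro m hm
      have hm0 : m = 0 := funext fun i => funext fun j => hs m hm i (by simp) j
      simp [hm0]
    rw [hC, finrank_bot]
    push_cast
    rw [zero_mul]
    positivity
  | @insert a s' ha IH =>
    set B1 := C.map (rowProj a) with hB1def
    set C1 := C ⊓ LinearMap.ker (rowProj a) with hC1def
    have hrow1 : ∀ m ∈ C1, ∀ i, (fun j => m i j) ∈ B := fun m hm i => hrow m hm.1 i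
    have hs1 : ∀ m ∈ C1, ∀ i ∉ s', ∀ j, m i j = 0 := by
      intro m hm i hi j
      by_cases hia : i = a
      · subst hia
        have := LinearMap.mem_ker.mp hm.2
        exact congrFun this j
      · exact hs m hm.1 i (by simp [hia, hi]) j
    have hB1le : B1 ≤ B := by
      rintro _ ⟨m, hm, rfl⟩
      exact hrow m hm a
    -- rank-nullity
    have hrank : finrank F C = finrank F C1 + finrank F B1 := by
      have h1 : LinearMap.range ((rowProj a).comp C.subtype) = B1 := by
        rw [LinearMap.range_comp, Submodule.range_subtype]
      have h2 : LinearMap.ker ((rowProj a).comp C.subtype) = Submodule.comap C.subtype C1 := by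
        rw [LinearMap.ker_comp, hC1def, Submodule.comap_inf, Submodule.comap_subtype_self]
        simp
      have h3 := LinearMap.finrank_range_add_finrank_ker ((rowProj a).comp C.subtype)
      rw [h1, h2] at h3
      have h4 : finrank F (Submodule.comap C.subtype C1) = finrank F C1 :=
        (Submodule.comapSubtypeEquivOfLe (inf_le_left : C1 ≤ C)).finrank_eq
      omega
    have hkey : ∀ j, finrank F (C1.map (colProj j)) + (if j ∈ codeSupp B1 then 1 else 0)
        ≤ finrank F (C.map (colProj j)) := by
      intro j
      have hle : C1.map (colProj j) ≤ C.map (colProj j) :=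
        Submodule.map_mono inf_le_left
      by_cases hj : j ∈ codeSupp B1
      · rw [if_pos hj]
        obtain ⟨c, hc, hcj⟩ := hj
        obtain ⟨m, hm, rfl⟩ := hc
        have hv : colProj j m ∈ C.map (colProj j) := Submodule.mem_map_of_mem hm
        have hvnot : colProj j m ∉ C1.map (colProj j) := by
          rintro ⟨m', hm', he⟩
          have h0 : m' a j = 0 := by
            have := LinearMap.mem_ker.mp hm'.2
            exact congrFun this j
          have : (colProj j m') a = (colProj j m) a := congrFun he a
          simp only [colProj, LinearMap.coe_mk, AddHom.coe_mk] at this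
          change m' a j = m a j at this
          rw [h0] at this
          exact hcj this.symm
        have hlt : C1.map (colProj j) < C.map (colProj j) :=
          lt_of_le_of_ne hle (fun h => hvnot (h ▸ hv))
        have := Submodule.finrank_lt_finrank_of_lt hlt
        omega
      · simp only [if_neg hj, add_zero]
        exact Submodule.finrank_mono hle
    have hwtB1 : codeWt B1 = ∑ j, (if j ∈ codeSupp B1 then 1 else 0) := by
      rw [codeWt, show codeSupp B1 = ↑(Finset.univ.filter (· ∈ codeSupp B1)) by ext; simp,
        Set.ncard_coe_finset, Finset.card_filter]
      simp
    have hsum1 : (∑ j, finrank F (C1.map (colProj j))) + codeWt B1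
        ≤ ∑ j, finrank F (C.map (colProj j)) := by
      rw [hwtB1, ← Finset.sum_add_distrib]
      exact Finset.sum_le_sum fun j _ => hkey j
    have hIH : ((∑ j, finrank F (C1.map (colProj j)) : ℕ) : ℝ) ≥ finrank F C1 * μ :=
      IH C1 hrow1 hs1
    have hB1wt : (codeWt B1 : ℝ) ≥ finrank F B1 * μ := hB B1 hB1le
    have hsum1' : ((∑ j, finrank F (C1.map (colProj j)) : ℕ) : ℝ) + (codeWt B1 : ℝ)
        ≤ ((∑ j, finrank F (C.map (colProj j)) : ℕ) : ℝ) := by exact_mod_cast hsum1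
    rw [hrank]
    push_cast at hIH hB1wt hsum1' ⊢
    linarith

lemma matWt_eq_sum (C : Submodule F (Matrix (Fin nA) (Fin nB) F)) :
    matWt C = ∑ j, codeWt (C.map (colProj j)) := by
  classical
  have hmem : ∀ (i : Fin nA) (j : Fin nB),
      (i, j) ∈ matSupp C ↔ i ∈ codeSupp (C.map (colProj j)) := by
    intro i j
    constructor
    · rintro ⟨m, hm, hne⟩
      exact ⟨colProj j m, Submodule.mem_map_of_mem hm, hne⟩
    · rintro ⟨c, ⟨m, hm, rfl⟩, hne⟩
      exact ⟨m, hm, hne⟩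
  rw [matWt, show matSupp C = ↑(Finset.univ.filter (· ∈ matSupp C)) by ext; simp,
    Set.ncard_coe_finset]
  rw [Finset.card_eq_sum_card_fiberwise (f := Prod.snd) (t := Finset.univ)
    (fun p _ => Finset.mem_univ _)]
  refine Finset.sum_congr rfl fun j _ => ?_
  rw [codeWt, show codeSupp (C.map (colProj j)) =
      ↑(Finset.univ.filter (· ∈ codeSupp (C.map (colProj j)))) by ext; simp,
    Set.ncard_coe_finset]
  refine Finset.card_nbij' (fun p => p.1) (fun i => (i, j)) ?_ ?_ ?_ ?_
  · rintro ⟨i, j'⟩ hp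
    rw [Finset.mem_coe] at hp ⊢
    simp only [Finset.mem_filter, Finset.mem_univ, true_and] at hp ⊢
    obtain ⟨hp1, rfl⟩ := hp
    exact (hmem i j').1 hp1
  · intro i hi
    rw [Finset.mem_coe] at hi ⊢
    simp only [Finset.mem_filter, Finset.mem_univ, true_and] at hi ⊢
    exact ⟨(hmem i j).2 hi, trivial⟩
  · rintro ⟨i, j'⟩ hp
    rw [Finset.mem_coe] at hp
    simp only [Finset.mem_filter] at hp
    obtain ⟨-, rfl⟩ := hp
    rfl
  · intro i _
    rfl

end Aux

/-- Semistability is preserved by tensor products of codes: if every nonzero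
subcode `A' ⊆ A` satisfies `w(A') ≥ dim A' · w(A) / dim A`, and similarly for
`B`, then every nonzero subcode `C ⊆ A ⊗ B` satisfies
`w(C) ≥ dim C · w(A) w(B) / (dim A · dim B)`. -/
theorem tensor_semistable {F : Type*} [Field F] {nA nB : ℕ}
    (A : Submodule F (Fin nA → F)) (B : Submodule F (Fin nB → F))
    (hA : ∀ A' : Submodule F (Fin nA → F), A' ≤ A → A' ≠ ⊥ →
      (codeWt A' : ℝ) ≥ Module.finrank F A' * codeWt A / Module.finrank F A)
    (hB : ∀ B' : Submodule F (Fin nB → F), B' ≤ B → B' ≠ ⊥ →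
      (codeWt B' : ℝ) ≥ Module.finrank F B' * codeWt B / Module.finrank F B)
    (C : Submodule F (Matrix (Fin nA) (Fin nB) F)) (hC : C ≤ codeTensor A B)
    (hC0 : C ≠ ⊥) :
    (matWt C : ℝ) ≥ Module.finrank F C * (codeWt A * codeWt B) /
      (Module.finrank F A * Module.finrank F B) := by
  classical
  have hμB : ∀ B' : Submodule F (Fin nB → F), B' ≤ B →
      (codeWt B' : ℝ) ≥ finrank F B' * ((codeWt B : ℝ) / (finrank F B : ℝ)) := by
    intro B' hle
    by_cases h0 : B' = ⊥
    · subst h0; simp [codeWt_bot, finrank_bot]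
    · have := hB B' hle h0
      rwa [mul_div_assoc] at this
  have hcols : ∀ j, C.map (colProj j) ≤ A := by
    rintro j _ ⟨m, hm, rfl⟩
    exact (hC hm).1 j
  have hrows : ∀ m ∈ C, ∀ i, (fun j => m i j) ∈ B := fun m hm i => (hC hm).2 i
  have hzero : ∀ m ∈ C, ∀ i ∉ (Finset.univ : Finset (Fin nA)), ∀ j, m i j = 0 := by
    intro m _ i hi
    exact absurd (Finset.mem_univ i) hi
  have hmain := sum_finrank_col_ge B _ hμB Finset.univ C hrows hzero
  have hAcol : ∀ j, (codeWt (C.map (colProj j)) : ℝ) ≥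
      (finrank F (C.map (colProj j)) : ℝ) * ((codeWt A : ℝ) / (finrank F A : ℝ)) := by
    intro j
    by_cases h0 : C.map (colProj j) = ⊥
    · rw [h0]; simp [codeWt_bot, finrank_bot]
    · have := hA _ (hcols j) h0
      rwa [mul_div_assoc] at this
  have hq : (0:ℝ) ≤ (codeWt A : ℝ) / (finrank F A : ℝ) := by positivity
  have hchain : ((∑ j, codeWt (C.map (colProj j)) : ℕ) : ℝ) ≥
      ((∑ j, finrank F (C.map (colProj j)) : ℕ) : ℝ) *
        ((codeWt A : ℝ) / (finrank F A : ℝ)) := by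
    push_cast
    rw [Finset.sum_mul]
    exact Finset.sum_le_sum fun j _ => hAcol j
  have hstep : ((∑ j, finrank F (C.map (colProj j)) : ℕ) : ℝ) *
        ((codeWt A : ℝ) / (finrank F A : ℝ)) ≥
      ((finrank F C : ℝ) * ((codeWt B : ℝ) / (finrank F B : ℝ))) *
        ((codeWt A : ℝ) / (finrank F A : ℝ)) :=
    mul_le_mul_of_nonneg_right hmain hq
  rw [matWt_eq_sum]
  push_cast at hchain hstep ⊢
  calc (finrank F C : ℝ) * ((codeWt A : ℝ) * (codeWt B : ℝ)) /
        ((finrank F A : ℝ) * (finrank F B : ℝ))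
      = ((finrank F C : ℝ) * ((codeWt B : ℝ) / (finrank F B : ℝ))) *
        ((codeWt A : ℝ) / (finrank F A : ℝ)) := by ring
    _ ≤ _ := le_trans hstep hchain
end

section
/- (Schaathun's bound, key lemma) Let A ⊆ F^{n_A}, B ⊆ F^{n_B} be linear codes of dimensions k_A, k_B, and C ⊆ A ⊗ B a subcode. For 1 ≤ i ≤ k_A set J_i = {j ∈ [n_B] : dim(π̂_j(C)) ≥ i} and t_i = dim(B ∩ F^{J_i}). Then Σ_{i=1}^{k_A} t_i ≥ dim(C). -/
/-- The subspace `F^J ⊆ F^n` of vectors supported in `J`. -/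
def coordSubspace (F : Type*) [Field F] {n : ℕ} (S : Set (Fin n)) :
    Submodule F (Fin n → F) where
  carrier := {x | ∀ i ∉ S, x i = 0}
  add_mem' := by
    intro a b ha hb i hi
    simp [ha i hi, hb i hi]
  zero_mem' := by intro i _; rfl
  smul_mem' := by
    intro r x hx i hi
    simp [hx i hi]

lemma colProj_apply {F : Type*} [Field F] {nA nB : ℕ} (j : Fin nB)
    (m : Matrix (Fin nA) (Fin nB) F) : colProj j m = fun i => m i j := rfl

set_option synthInstance.maxHeartbeats 1000000 in
set_option maxHeartbeats 1000000 in
/-- Schaathun's key lemma: with `J_i = {j : dim π̂_j(C) ≥ i}` and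
`t_i = dim (B ∩ F^{J_i})`, one has `∑_{i=1}^{k_A} t_i ≥ dim C`. -/
theorem schaathun_key_lemma {F : Type*} [Field F] {nA nB : ℕ}
    (A : Submodule F (Fin nA → F)) (B : Submodule F (Fin nB → F))
    (kA kB : ℕ) (hkA : Module.finrank F A = kA) (hkB : Module.finrank F B = kB)
    (C : Submodule F (Matrix (Fin nA) (Fin nB) F)) (hC : C ≤ codeTensor A B) :
    Module.finrank F C ≤
      ∑ i ∈ Finset.Icc 1 kA,
        Module.finrank F ↥(B ⊓ coordSubspace F
          {j : Fin nB | i ≤ Module.finrank F ↥(C.map (colProj j))}) := by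
  classical
  set d : Fin nB → ℕ := fun j => Module.finrank F ↥(C.map (colProj j)) with hdd
  have hdA : ∀ j, d j ≤ kA := by
    intro j
    rw [← hkA]
    refine Submodule.finrank_mono ?_
    rintro x hx
    obtain ⟨m, hm, rfl⟩ := hx
    exact (hC hm).1 j
  set key : Fin nB → ℕ := fun j => d j * nB + j.val with hkeydef
  have keylt : ∀ j, key j < (kA + 1) * nB := by
    intro j
    have h1 : j.val < nB := j.2
    have h2 : d j ≤ kA := hdA j
    calc key j = d j * nB + j.val := rfl
      _ < d j * nB + nB := by omega
      _ = (d j + 1) * nB := by ring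
      _ ≤ (kA + 1) * nB := Nat.mul_le_mul_right nB (by omega)
  have keymod : ∀ j : Fin nB, key j % nB = j.val := by
    intro j
    have : key j = d j * nB + j.val := rfl
    rw [this, Nat.add_comm, Nat.add_mul_mod_self_right]
    exact Nat.mod_eq_of_lt j.2
  have keyinj : Function.Injective key := by
    intro a b h
    have : a.val = b.val := by rw [← keymod a, ← keymod b, h]
    exact Fin.ext this
  have keyd : ∀ a b : Fin nB, key a ≤ key b → d a ≤ d b := by
    intro a b h
    by_contra hlt
    push_neg at hlt
    have : key b < key a := by
      calc key b = d b * nB + b.val := rfl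
        _ < d b * nB + nB := by have := b.2; omega
        _ = (d b + 1) * nB := by ring
        _ ≤ d a * nB := Nat.mul_le_mul_right nB (by omega)
        _ ≤ key a := Nat.le_add_right _ _
    omega
  set P : ℕ → Submodule F (Matrix (Fin nA) (Fin nB) F) := fun n =>
    C ⊓ ⨅ (j : Fin nB) (_ : key j < n), LinearMap.ker (colProj j) with hPdef
  have memP : ∀ (n : ℕ) (m : Matrix (Fin nA) (Fin nB) F),
      m ∈ P n ↔ m ∈ C ∧ ∀ j, key j < n → ∀ s, m s j = 0 := by
    intro n m
    rw [hPdef]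
    simp only [Submodule.mem_inf, Submodule.mem_iInf, LinearMap.mem_ker, colProj_apply,
      funext_iff]
    constructor
    · rintro ⟨h1, h2⟩
      exact ⟨h1, fun j hj s => h2 j hj s⟩
    · rintro ⟨h1, h2⟩
      exact ⟨h1, fun j hj s => h2 j hj s⟩
  set c : ℕ → ℕ := fun n => Module.finrank F (P n) with hcdef
  set N := (kA + 1) * nB with hN
  have hPmono : ∀ n, P (n + 1) ≤ P n := by
    intro n m hm
    rw [memP] at *
    exact ⟨hm.1, fun j hj s => hm.2 j (Nat.lt_succ_of_lt hj) s⟩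
  have hcN : c N = 0 := by
    have hPN : P N = ⊥ := by
      rw [eq_bot_iff]
      intro m hm
      rw [memP] at hm
      have hm0 : m = 0 := by
        funext s j
        exact hm.2 j (keylt j) s
      simp [hm0]
    rw [show c N = Module.finrank F ↥(P N) from rfl, hPN]
    exact finrank_bot F _
  -- the step bound via rank-nullity
  have step : ∀ j : Fin nB, c (key j) ≤ d j + c (key j + 1) := by
    intro j
    have hsplit : P (key j + 1) = P (key j) ⊓ LinearMap.ker (colProj j) := by
      ext m
      simp only [Submodule.mem_inf, memP, LinearMap.mem_ker, colProj_apply, funext_iff]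
      constructor
      · rintro ⟨h1, h2⟩
        exact ⟨⟨h1, fun j' hj' s => h2 j' (hj'.trans (Nat.lt_succ_self _)) s⟩,
          fun s => h2 j (Nat.lt_succ_self _) s⟩
      · rintro ⟨⟨h1, h2⟩, h3⟩
        refine ⟨h1, fun j' hj' s => ?_⟩
        rcases Nat.lt_succ_iff_lt_or_eq.mp hj' with h | h
        · exact h2 j' h s
        · have hjj : j' = j := keyinj h
          subst hjj
          exact h3 s
    have h1 : Module.finrank F (LinearMap.range ((colProj j).domRestrict (P (key j))))
        + Module.finrank F (LinearMap.ker ((colProj j).domRestrict (P (key j))))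
        = c (key j) :=
      LinearMap.finrank_range_add_finrank_ker _
    have h2 : Module.finrank F (LinearMap.range ((colProj j).domRestrict (P (key j)))) ≤ d j := by
      rw [LinearMap.range_domRestrict]
      exact Submodule.finrank_mono (Submodule.map_mono inf_le_left)
    have h3 : Module.finrank F (LinearMap.ker ((colProj j).domRestrict (P (key j))))
        = c (key j + 1) := by
      rw [LinearMap.ker_domRestrict]
      have e1 : (LinearMap.ker (colProj j)).comap (P (key j)).subtype
          = (P (key j) ⊓ LinearMap.ker (colProj j)).comap (P (key j)).subtype := by
        ext x
        simp [Submodule.mem_comap, Submodule.mem_inf, x.2]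
      rw [e1, ← hsplit]
      exact (Submodule.comapSubtypeEquivOfLe (hPmono (key j))).finrank_eq
    omega
  -- telescoping
  have tele : ∀ n : ℕ, c 0 ≤ (∑ m ∈ Finset.range n, (c m - c (m + 1))) + c n := by
    intro n
    induction n with
    | zero => simp
    | succ n ih =>
      rw [Finset.sum_range_succ]
      have h := le_tsub_add (a := c n) (b := c (n + 1))
      omega
  have hc0 : c 0 = Module.finrank F C := by
    have hP0 : P 0 = C := by
      ext m
      rw [memP]
      simp
    rw [show c 0 = Module.finrank F ↥(P 0) from rfl, hP0]
  set ρ : Fin nB → ℕ := fun j => c (key j) - c (key j + 1) with hρdef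
  have hsum : Module.finrank F C ≤ ∑ j : Fin nB, ρ j := by
    have e2 : ∑ m ∈ Finset.range N, (c m - c (m + 1))
        = ∑ m ∈ Finset.univ.image key, (c m - c (m + 1)) := by
      rw [eq_comm]
      apply Finset.sum_subset
      · intro x hx
        rw [Finset.mem_image] at hx
        obtain ⟨j, -, rfl⟩ := hx
        exact Finset.mem_range.2 (keylt j)
      · intro x _ hximg
        have hPx : P x = P (x + 1) := by
          refine le_antisymm ?_ (hPmono x)
          intro m hm
          rw [memP] at *
          refine ⟨hm.1, fun j hj s => ?_⟩
          have hne : key j ≠ x := fun h => hximg (Finset.mem_image.2 ⟨j, Finset.mem_univ j, h⟩)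
          exact hm.2 j (by omega) s
        have : c x = c (x + 1) := by
          rw [show c x = Module.finrank F ↥(P x) from rfl,
            show c (x+1) = Module.finrank F ↥(P (x+1)) from rfl, hPx]
        omega
    have e3 : ∑ m ∈ Finset.univ.image key, (c m - c (m + 1)) = ∑ j : Fin nB, ρ j :=
      Finset.sum_image (fun a _ b _ h => keyinj h)
    calc Module.finrank F C = c 0 := hc0.symm
      _ ≤ (∑ m ∈ Finset.range N, (c m - c (m + 1))) + c N := tele N
      _ = ∑ m ∈ Finset.range N, (c m - c (m + 1)) := by rw [hcN, add_zero]
      _ = ∑ j : Fin nB, ρ j := by rw [e2, e3]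
  have hρd : ∀ j, ρ j ≤ d j := by
    intro j
    have h1 := step j
    have h2 : ρ j = c (key j) - c (key j + 1) := rfl
    omega
  -- witnesses
  have witness : ∀ j : Fin nB, 1 ≤ ρ j →
      ∃ m : Matrix (Fin nA) (Fin nB) F, ∃ s : Fin nA, m ∈ C ∧
        (∀ j', key j' < key j → ∀ s', m s' j' = 0) ∧ m s j ≠ 0 := by
    intro j hj
    by_contra hcon
    push_neg at hcon
    have hle : P (key j) ≤ P (key j + 1) := by
      intro m hm
      rw [memP] at *
      refine ⟨hm.1, fun j' hj' s => ?_⟩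
      rcases Nat.lt_succ_iff_lt_or_eq.mp hj' with h | h
      · exact hm.2 j' h s
      · have hjj : j' = j := keyinj h
        subst hjj
        exact hcon m s hm.1 hm.2
    have hce : c (key j) = c (key j + 1) :=
      le_antisymm (Submodule.finrank_mono hle) (Submodule.finrank_mono (hPmono _))
    have h2 : ρ j = c (key j) - c (key j + 1) := rfl
    omega
  -- cardinality bound for each level i
  have hcard : ∀ i : ℕ, 1 ≤ i →
      (Finset.univ.filter fun j : Fin nB => i ≤ ρ j).card
        ≤ Module.finrank F ↥(B ⊓ coordSubspace F {j : Fin nB | i ≤ d j}) := by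
    intro i hi
    set W := B ⊓ coordSubspace F {j : Fin nB | i ≤ d j} with hW
    set Si := Finset.univ.filter fun j : Fin nB => i ≤ ρ j with hSi
    have hwit : ∀ j ∈ Si, ∃ v : Fin nB → F, v ∈ W ∧ v j ≠ 0 ∧
        ∀ j', key j' < key j → v j' = 0 := by
      intro j hjSi
      rw [hSi, Finset.mem_filter] at hjSi
      have hiρ : i ≤ ρ j := hjSi.2
      obtain ⟨m, s, hmC, hzero, hnz⟩ := witness j (le_trans hi hiρ)
      refine ⟨fun j' => m s j', ?_, hnz, fun j' hj' => hzero j' hj' s⟩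
      rw [hW, Submodule.mem_inf]
      constructor
      · exact (hC hmC).2 s
      · intro j' hj'
        simp only [Set.mem_setOf_eq, not_le] at hj'
        by_contra hne
        have hcol : ¬ key j' < key j := fun h => hne (hzero j' h s)
        have : d j ≤ d j' := keyd j j' (by omega)
        have : i ≤ d j' := le_trans (le_trans hiρ (hρd j)) this
        omega
    choose v hvW hvnz hvtri using hwit
    have hLI : LinearIndependent F (fun j : {x // x ∈ Si} => v j.1 j.2) := by
      rw [linearIndependent_iff']
      intro s g hsum0 jj hjj
      by_contra hg
      obtain ⟨j0, hj0, hmin⟩ := Finset.exists_min_image (s.filter fun j => g j ≠ 0)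
        (fun j => key j.1) ⟨jj, Finset.mem_filter.2 ⟨hjj, hg⟩⟩
      rw [Finset.mem_filter] at hj0
      have heval := congrFun hsum0 (j0.1 : Fin nB)
      rw [Finset.sum_apply] at heval
      have hsingle : ∑ jx ∈ s, (g jx • v jx.1 jx.2) (j0.1 : Fin nB)
          = g j0 * v j0.1 j0.2 j0.1 := by
        rw [Finset.sum_eq_single j0]
        · simp
        · intro b hb hbne
          by_cases hgb : g b = 0
          · simp [hgb]
          · have hbf : b ∈ s.filter fun j => g j ≠ 0 := Finset.mem_filter.2 ⟨hb, hgb⟩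
            have hkle : key j0.1 ≤ key b.1 := hmin b hbf
            have hkne : key j0.1 ≠ key b.1 := by
              intro h
              exact hbne (Subtype.ext (keyinj h.symm))
            have hlt : key j0.1 < key b.1 := lt_of_le_of_ne hkle hkne
            simp [hvtri b.1 b.2 j0.1 hlt]
        · intro h
          exact absurd hj0.1 h
      rw [hsingle] at heval
      have : g j0 = 0 ∨ v j0.1 j0.2 j0.1 = 0 := mul_eq_zero.mp heval
      rcases this with h | h
      · exact hj0.2 h
      · exact hvnz j0.1 j0.2 h
    calc Si.card = Fintype.card {x // x ∈ Si} := (Fintype.card_coe Si).symm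
      _ = Module.finrank F (Submodule.span F (Set.range fun j : {x // x ∈ Si} => v j.1 j.2)) :=
        (finrank_span_eq_card hLI).symm
      _ ≤ Module.finrank F W := by
        refine Submodule.finrank_mono (Submodule.span_le.2 ?_)
        rintro x ⟨j, rfl⟩
        exact hvW j.1 j.2
  -- final counting
  have count : ∑ j : Fin nB, ρ j
      = ∑ i ∈ Finset.Icc 1 kA, (Finset.univ.filter fun j : Fin nB => i ≤ ρ j).card := by
    have hρkA : ∀ j, ρ j ≤ kA := fun j => le_trans (hρd j) (hdA j)
    have e1 : ∀ j : Fin nB, ρ j = ∑ i ∈ Finset.Icc 1 kA, if i ≤ ρ j then 1 else 0 := by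
      intro j
      have hf : Finset.filter (fun i => i ≤ ρ j) (Finset.Icc 1 kA) = Finset.Icc 1 (ρ j) := by
        ext x
        simp only [Finset.mem_filter, Finset.mem_Icc]
        have := hρkA j
        omega
      rw [← Finset.sum_filter, hf, Finset.sum_const, smul_eq_mul, mul_one, Nat.card_Icc]
      omega
    calc ∑ j : Fin nB, ρ j = ∑ j : Fin nB, ∑ i ∈ Finset.Icc 1 kA, if i ≤ ρ j then 1 else 0 :=
        Finset.sum_congr rfl (fun j _ => e1 j)
      _ = ∑ i ∈ Finset.Icc 1 kA, ∑ j : Fin nB, if i ≤ ρ j then 1 else 0 := Finset.sum_comm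
      _ = ∑ i ∈ Finset.Icc 1 kA, (Finset.univ.filter fun j : Fin nB => i ≤ ρ j).card := by
        refine Finset.sum_congr rfl (fun i _ => ?_)
        rw [Finset.card_filter]
  calc Module.finrank F C ≤ ∑ j : Fin nB, ρ j := hsum
    _ = ∑ i ∈ Finset.Icc 1 kA, (Finset.univ.filter fun j : Fin nB => i ≤ ρ j).card := count
    _ ≤ ∑ i ∈ Finset.Icc 1 kA,
        Module.finrank F ↥(B ⊓ coordSubspace F {j : Fin nB | i ≤ d j}) :=
      Finset.sum_le_sum (fun i hi => hcard i (Finset.mem_Icc.mp hi).1)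
end
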